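/- For AF relaying, removing the '1' from the denominator yields an upper bound: for all a, b, c, P^s, P^r ≥ 0 with a·P^s + b·P^r > 0, (1/2)·log(1 + (a·b·P^r·P^s)/(1 + a·P^s + b·P^r) + c·P^s) ≤ (1/2)·log(1 + (a·b·P^r·P^s)/(a·P^s + b·P^r) + c·P^s), and the right-hand side, as a function of (P^s, P^r), is concave on the open positive quadrant. -/

import Mathlib

open Real

private lemma convex_quadrant : Convex ℝ {p : ℝ × ℝ | 0 < p.1 ∧ 0 < p.2} := by
  exact (convex_Ioi (0:ℝ)).prod (convex_Ioi (0:ℝ))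

private lemma log_comp_concave {S : Set (ℝ × ℝ)} {f : ℝ × ℝ → ℝ} (hS : Convex ℝ S)
    (hf : ConcaveOn ℝ S f) (hpos : ∀ x ∈ S, 0 < f x) :
    ConcaveOn ℝ S (fun x => Real.log (f x)) := by
  refine ⟨hS, ?_⟩
  intro x hx y hy s t hs ht hst
  have hfx := hpos x hx
  have hfy := hpos y hy
  have hcomb : 0 < s * f x + t * f y := by
    rcases eq_or_lt_of_le hs with h | h
    · have ht1 : t = 1 := by linarith
      simp [← h, ht1, hfy]
    · have h1 : 0 < s * f x := mul_pos h hfx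
      have h2 : 0 ≤ t * f y := mul_nonneg ht hfy.le
      linarith
  have hlog : s • Real.log (f x) + t • Real.log (f y) ≤ Real.log (s • f x + t • f y) :=
    strictConcaveOn_log_Ioi.concaveOn.2 hfx hfy hs ht hst
  refine hlog.trans ?_
  have hle : s • f x + t • f y ≤ f (s • x + t • y) := hf.2 hx hy hs ht hst
  exact Real.log_le_log (by simpa [smul_eq_mul] using hcomb) hle

private lemma harm_concave {a b : ℝ} (ha : 0 < a) (hb : 0 < b) :
    ConcaveOn ℝ {p : ℝ × ℝ | 0 < p.1 ∧ 0 < p.2}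
      (fun p : ℝ × ℝ => a * b * p.2 * p.1 / (a * p.1 + b * p.2)) := by
  refine ⟨convex_quadrant, ?_⟩
  rintro ⟨x1, x2⟩ ⟨hx1, hx2⟩ ⟨y1, y2⟩ ⟨hy1, hy2⟩ s t hs ht hst
  simp only [Prod.smul_mk, Prod.mk_add_mk, smul_eq_mul]
  have d1 : 0 < a * x1 + b * x2 := by positivity
  have d2 : 0 < a * y1 + b * y2 := by positivity
  have d3 : 0 < a * (s * x1 + t * y1) + b * (s * x2 + t * y2) := by
    have : a * (s * x1 + t * y1) + b * (s * x2 + t * y2)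
        = s * (a * x1 + b * x2) + t * (a * y1 + b * y2) := by ring
    rw [this]
    rcases eq_or_lt_of_le hs with h | h
    · have ht1 : t = 1 := by linarith
      simp [← h, ht1, d2]
    · nlinarith [mul_pos h d1, mul_nonneg ht d2.le]
  rw [show s * (a * b * x2 * x1 / (a * x1 + b * x2)) + t * (a * b * y2 * y1 / (a * y1 + b * y2))
      = (s * (a * b * x2 * x1) * (a * y1 + b * y2) + t * (a * b * y2 * y1) * (a * x1 + b * x2))
        / ((a * x1 + b * x2) * (a * y1 + b * y2)) from by field_simp,
    div_le_div_iff₀ (by positivity) d3]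
  nlinarith [mul_nonneg (mul_nonneg hs ht) (sq_nonneg (a * b * (x1 * y2 - y1 * x2))),
    sq_nonneg (x1 * y2 - y1 * x2), mul_pos d1 d2, mul_pos ha hb]

theorem stmt_16 (a b c : ℝ) (ha : 0 < a) (hb : 0 < b) (hc : 0 ≤ c) :
    (∀ Ps Pr : ℝ, 0 < Ps → 0 < Pr →
      (1 / 2) * Real.log (1 + a * b * Pr * Ps / (1 + a * Ps + b * Pr) + c * Ps) ≤
      (1 / 2) * Real.log (1 + a * b * Pr * Ps / (a * Ps + b * Pr) + c * Ps)) ∧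
    ConcaveOn ℝ {p : ℝ × ℝ | 0 < p.1 ∧ 0 < p.2}
      (fun p : ℝ × ℝ =>
        (1 / 2) * Real.log (1 + a * b * p.2 * p.1 / (a * p.1 + b * p.2) + c * p.1)) := by
  constructor
  · intro Ps Pr hPs hPr
    have hnum : 0 ≤ a * b * Pr * Ps := by positivity
    have hd1 : 0 < a * Ps + b * Pr := by positivity
    have hd2 : a * Ps + b * Pr ≤ 1 + a * Ps + b * Pr := by linarith
    have hdiv : a * b * Pr * Ps / (1 + a * Ps + b * Pr) ≤ a * b * Pr * Ps / (a * Ps + b * Pr) :=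
      div_le_div_of_nonneg_left hnum hd1 hd2
    have hpos : 0 < 1 + a * b * Pr * Ps / (1 + a * Ps + b * Pr) + c * Ps := by positivity
    have := Real.log_le_log hpos (by linarith : 1 + a * b * Pr * Ps / (1 + a * Ps + b * Pr) + c * Ps
        ≤ 1 + a * b * Pr * Ps / (a * Ps + b * Pr) + c * Ps)
    nlinarith [this]
  · set S := {p : ℝ × ℝ | 0 < p.1 ∧ 0 < p.2} with hSdef
    have haff : ConcaveOn ℝ S (fun p : ℝ × ℝ => 1 + c * p.1) := by
      refine ⟨convex_quadrant, ?_⟩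
      rintro ⟨x1, x2⟩ hx ⟨y1, y2⟩ hy s t hs ht hst
      simp only [Prod.smul_mk, Prod.mk_add_mk, smul_eq_mul]
      apply le_of_eq
      linear_combination hst
    have hinner : ConcaveOn ℝ S
        (fun p : ℝ × ℝ => 1 + a * b * p.2 * p.1 / (a * p.1 + b * p.2) + c * p.1) := by
      have h := (harm_concave ha hb).add haff
      convert h using 2 with p
      · rfl
      simp only [Pi.add_apply]
      ring
    have hinnerpos : ∀ p ∈ S, 0 < 1 + a * b * p.2 * p.1 / (a * p.1 + b * p.2) + c * p.1 := by
      rintro ⟨p1, p2⟩ ⟨hp1, hp2⟩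
      have : (0:ℝ) < a * p1 + b * p2 := by positivity
      positivity
    have hlog := log_comp_concave convex_quadrant hinner hinnerpos
    have hfinal := hlog.smul (by norm_num : (0:ℝ) ≤ 1 / 2)
    simpa [smul_eq_mul] using hfinal
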